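/- arXiv:2101.02967 — 5 statements merged into one kernel-verified Lean document; each statement's English description precedes it below -/
import Mathlib

section
/- There is no square-summable family (x_{ℓ,m})_{(ℓ,m)∈S} (i.e., with ∑_{(ℓ,m)∈S} |x_{ℓ,m}|² < ∞) such that for every (ℓ,m) ∈ S one has C_{ℓ+1}·√((ℓ−m+1)(ℓ−m+2))·x_{ℓ+1,m−1} + C_ℓ·√((ℓ+m−1)(ℓ+m))·x_{ℓ−1,m−1} = δ_{(ℓ,m),(1,1)}, where x_{ℓ',m'} := 0 for (ℓ',m') ∉ S and δ is the Kronecker delta. Equivalently: the vector ξ_{1,1} is not in the image of the coefficientwise extension of ρ(F₊) to square-summable families, so the 1-cocycle c with c(F₊) = ξ_{1,1} is not a coboundary. -/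
noncomputable section

/-- The index set `S = {(ℓ,m) : 1 ≤ ℓ, |m| ≤ ℓ}` of the orthonormal basis `(ξ_{ℓ,m})`. -/
abbrev inS (p : ℤ × ℤ) : Prop := 1 ≤ p.1 ∧ |p.2| ≤ p.1

/-- `C ℓ = i √(ℓ²-1) / √(4ℓ²-1)`. -/
def C (ℓ : ℤ) : ℂ := Complex.I * (Real.sqrt ((ℓ : ℝ) ^ 2 - 1) / Real.sqrt (4 * (ℓ : ℝ) ^ 2 - 1))

/-- Real square root of an integer, viewed as a complex number. -/
def csqrt (a : ℤ) : ℂ := ((Real.sqrt (a : ℝ) : ℝ) : ℂ)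

lemma normC_sq (ℓ : ℤ) (hℓ : 1 ≤ ℓ) :
    ‖C ℓ‖ ^ 2 = ((ℓ : ℝ) ^ 2 - 1) / (4 * (ℓ : ℝ) ^ 2 - 1) := by
  have h1 : (0:ℝ) ≤ (ℓ : ℝ) ^ 2 - 1 := by
    have : (1:ℝ) ≤ (ℓ:ℝ) := by exact_mod_cast hℓ
    nlinarith
  have h2 : (0:ℝ) < 4 * (ℓ : ℝ) ^ 2 - 1 := by
    have : (1:ℝ) ≤ (ℓ:ℝ) := by exact_mod_cast hℓ
    nlinarith
  rw [C, norm_mul, Complex.norm_I, one_mul]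
  rw [show ((Real.sqrt ((ℓ : ℝ) ^ 2 - 1) : ℝ) : ℂ) / ((Real.sqrt (4 * (ℓ : ℝ) ^ 2 - 1) : ℝ) : ℂ)
      = (((Real.sqrt ((ℓ : ℝ) ^ 2 - 1) / Real.sqrt (4 * (ℓ : ℝ) ^ 2 - 1) : ℝ)) : ℂ) by push_cast; ring]
  rw [Complex.norm_real, Real.norm_eq_abs, abs_of_nonneg (by positivity), div_pow,
    Real.sq_sqrt h1, Real.sq_sqrt (le_of_lt h2)]

lemma csqrt_norm_sq (a : ℤ) (ha : 0 ≤ a) : ‖csqrt a‖ ^ 2 = (a : ℝ) := by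
  rw [csqrt, Complex.norm_real, Real.norm_eq_abs, abs_of_nonneg (Real.sqrt_nonneg _),
    Real.sq_sqrt (by exact_mod_cast ha)]

lemma csqrt_ne_zero (a : ℤ) (ha : 0 < a) : csqrt a ≠ 0 := by
  simp only [csqrt, ne_eq, Complex.ofReal_eq_zero]
  intro h
  have h1 : ((a:ℝ)) ≤ 0 := Real.sqrt_eq_zero'.mp h
  have h2 : (0:ℝ) < (a:ℝ) := by exact_mod_cast ha
  linarith

lemma C_one : C 1 = 0 := by
  norm_num [C]

lemma norm_rel (c1 c2 s z w : ℂ) (hs : s ≠ 0)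
    (h : c1 * s * z + c2 * s * w = 0) :
    ‖c1‖ ^ 2 * ‖z‖ ^ 2 = ‖c2‖ ^ 2 * ‖w‖ ^ 2 := by
  have h0 : (c1 * z + c2 * w) * s = 0 := by linear_combination h
  have h1 : c1 * z = -(c2 * w) := by
    rcases mul_eq_zero.mp h0 with h' | h'
    · linear_combination h'
    · exact absurd h' hs
  have h2 : ‖c1 * z‖ = ‖c2 * w‖ := by rw [h1, norm_neg]
  rw [norm_mul, norm_mul] at h2
  calc ‖c1‖ ^ 2 * ‖z‖ ^ 2 = (‖c1‖ * ‖z‖) ^ 2 := by ring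
    _ = (‖c2‖ * ‖w‖) ^ 2 := by rw [h2]
    _ = ‖c2‖ ^ 2 * ‖w‖ ^ 2 := by ring

lemma poly_ineq (p : ℝ) (hp : 0 ≤ p) :
    ((2*p+4)^2-1)*(4*(2*p+3)^2-1)*(4*p+4)*(4*p+9)
      ≤ ((2*p+3)^2-1)*(4*(2*p+4)^2-1)*(4*p+8)*(4*p+5) := by
  nlinarith [sq_nonneg p, pow_nonneg hp 3, pow_nonneg hp 4]

/-- There is no square-summable family `(x_{ℓ,m})` supported on `S` such that
`ρ(F₊) x = ξ_{1,1}` coefficientwise, i.e. such that for every `(ℓ,m) ∈ S`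
`C_{ℓ+1} √((ℓ-m+1)(ℓ-m+2)) x_{ℓ+1,m-1} + C_ℓ √((ℓ+m-1)(ℓ+m)) x_{ℓ-1,m-1} = δ_{(ℓ,m),(1,1)}`.
Hence `ξ_{1,1}` is not in the image of `ρ(F₊)`, so the 1-cocycle `c` with
`c(F₊) = ξ_{1,1}` is not a coboundary. -/
theorem xi11_not_in_image_of_Fplus :
    ¬ ∃ x : ℤ × ℤ → ℂ,
      (∀ p : ℤ × ℤ, ¬ inS p → x p = 0) ∧
      Summable (fun p : ℤ × ℤ => ‖x p‖ ^ 2) ∧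
      (∀ ℓ m : ℤ, 1 ≤ ℓ → |m| ≤ ℓ →
        C (ℓ + 1) * csqrt ((ℓ - m + 1) * (ℓ - m + 2)) * x (ℓ + 1, m - 1)
          + C ℓ * csqrt ((ℓ + m - 1) * (ℓ + m)) * x (ℓ - 1, m - 1)
          = if (ℓ, m) = (1, 1) then 1 else 0) := by
  rintro ⟨x, hsupp, hsum, heq⟩
  -- Base case: C 2 * √2 * x (2,0) = 1, hence ‖x (2,0)‖² = 5/2.
  have h00 : x (0, 0) = 0 := hsupp _ (by simp [inS])
  have hbase := heq 1 1 le_rfl (by norm_num)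
  norm_num [C_one, h00] at hbase
  -- hbase : C 2 * csqrt 2 * x (2, 0) = 1
  have hC2 : ‖C 2‖ ^ 2 = 1 / 5 := by
    rw [normC_sq 2 (by norm_num)]; norm_num
  have hs2 : ‖csqrt 2‖ ^ 2 = 2 := by
    rw [csqrt_norm_sq 2 (by norm_num)]; norm_num
  have hx2 : ‖x (2, 0)‖ ^ 2 = 5 / 2 := by
    have hn : ‖C 2 * csqrt 2 * x (2, 0)‖ ^ 2 = 1 := by rw [hbase]; norm_num
    rw [norm_mul, norm_mul, mul_pow, mul_pow, hC2, hs2] at hn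
    linarith
  -- Inductive lower bound along the column m = 0.
  have key : ∀ k : ℕ, (4*(k:ℝ)+5)/(4*(k:ℝ)+4) ≤ ‖x (2*(k:ℤ)+2, 0)‖ ^ 2 := by
    intro k
    induction k with
    | zero =>
      rw [show (2*((0:ℕ):ℤ)+2) = 2 by norm_num, hx2]
      norm_num
    | succ k ih =>
      -- the recurrence at (ℓ, m) = (2k+3, 1)
      have e : C (2*(k:ℤ)+4) * csqrt ((2*(k:ℤ)+3)*(2*(k:ℤ)+4)) * x (2*(k:ℤ)+4, 0)
          + C (2*(k:ℤ)+3) * csqrt ((2*(k:ℤ)+3)*(2*(k:ℤ)+4)) * x (2*(k:ℤ)+2, 0) = 0 := by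
        have e0 := heq (2*(k:ℤ)+3) 1 (by omega) (by rw [abs_one]; omega)
        rw [if_neg (by intro h; injection h with h1 h2; omega)] at e0
        have a2 : (2*(k:ℤ)+3-1+1) = 2*(k:ℤ)+3 := by ring
        have a3 : (2*(k:ℤ)+3-1+2) = 2*(k:ℤ)+4 := by ring
        have a4 : (2*(k:ℤ)+3+1-1) = 2*(k:ℤ)+3 := by ring
        have a6 : ((1:ℤ)-1) = 0 := by ring
        have a1 : (2*(k:ℤ)+3+1) = 2*(k:ℤ)+4 := by ring
        have a5 : (2*(k:ℤ)+3-1) = 2*(k:ℤ)+2 := by ring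
        rw [a2, a3, a4, a6, a1, a5] at e0
        exact e0
      have hrel := norm_rel _ _ _ _ _
        (csqrt_ne_zero ((2*(k:ℤ)+3)*(2*(k:ℤ)+4)) (by positivity)) e
      set p : ℝ := (k : ℝ) with hpdef
      have hp : (0:ℝ) ≤ p := Nat.cast_nonneg k
      have hc4 : ‖C (2*(k:ℤ)+4)‖ ^ 2 = ((2*p+4)^2-1)/(4*(2*p+4)^2-1) := by
        rw [normC_sq _ (by omega), hpdef]; push_cast; ring_nf
      have hc3 : ‖C (2*(k:ℤ)+3)‖ ^ 2 = ((2*p+3)^2-1)/(4*(2*p+3)^2-1) := by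
        rw [normC_sq _ (by omega), hpdef]; push_cast; ring_nf
      rw [hc4, hc3] at hrel
      set A : ℝ := ‖x (2*(k:ℤ)+2, 0)‖ ^ 2 with hAdef
      set B : ℝ := ‖x (2*(k:ℤ)+4, 0)‖ ^ 2 with hBdef
      have hA : (0:ℝ) ≤ A := sq_nonneg _
      have hB : (0:ℝ) ≤ B := sq_nonneg _
      have hn3 : (0:ℝ) < 4*(2*p+3)^2-1 := by nlinarith
      have hn4 : (0:ℝ) < 4*(2*p+4)^2-1 := by nlinarith
      have hm3 : (0:ℝ) < (2*p+3)^2-1 := by nlinarith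
      have hm4 : (0:ℝ) < (2*p+4)^2-1 := by nlinarith
      -- clear denominators in the relation
      have hn3' : (4*(2*p+3)^2-1) ≠ 0 := ne_of_gt hn3
      have hn4' : (4*(2*p+4)^2-1) ≠ 0 := ne_of_gt hn4
      have hrel' : ((2*p+4)^2-1) * (4*(2*p+3)^2-1) * B
          = ((2*p+3)^2-1) * (4*(2*p+4)^2-1) * A := by
        field_simp at hrel
        linear_combination hrel
      -- rewrite the goal
      have hgoal_idx : (2*((k:ℤ)+1)+2) = 2*(k:ℤ)+4 := by ring
      push_cast
      rw [hgoal_idx]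
      rw [div_le_iff₀ (by positivity)]
      rw [div_le_iff₀ (by positivity)] at ih
      -- ih : 4*p+5 ≤ A * (4*p+4); goal : 4*(p+1)+5 ≤ B * (4*(p+1)+4)
      have e3 := poly_ineq p hp
      have e1 : ((2*p+3)^2-1)*(4*(2*p+4)^2-1)*(4*p+8) * (4*p+5)
          ≤ ((2*p+3)^2-1)*(4*(2*p+4)^2-1)*(4*p+8) * (A*(4*p+4)) :=
        mul_le_mul_of_nonneg_left ih (le_of_lt (mul_pos (mul_pos hm3 hn4) (by linarith : (0:ℝ) < 4*p+8)))
      have e2 : ((2*p+3)^2-1)*(4*(2*p+4)^2-1)*(4*p+8) * (A*(4*p+4))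
          = (((2*p+4)^2-1)*(4*(2*p+3)^2-1)*(4*p+4)) * (B*(4*p+8)) := by
        linear_combination (-(4*p+8)*(4*p+4))*hrel'
      have hfin : (((2*p+4)^2-1)*(4*(2*p+3)^2-1)*(4*p+4)) * (4*p+9)
          ≤ (((2*p+4)^2-1)*(4*(2*p+3)^2-1)*(4*p+4)) * (B*(4*p+8)) := by
        linarith
      have hdpos : (0:ℝ) < ((2*p+4)^2-1)*(4*(2*p+3)^2-1)*(4*p+4) :=
        mul_pos (mul_pos hm4 hn3) (by linarith)
      have hfin2 : (4*p+9) ≤ B*(4*p+8) := le_of_mul_le_mul_left hfin hdpos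
      have hB8 : B*(4*(p+1)+4) = B*(4*p+8) := by ring
      rw [hB8]
      linarith
  -- Summability forces the terms to tend to 0, contradiction.
  have hinj : Function.Injective (fun k : ℕ => ((2*(k:ℤ)+2, 0) : ℤ × ℤ)) := by
    intro a b hab
    simp only [Prod.mk.injEq] at hab
    omega
  have hsum' : Summable (fun k : ℕ => ‖x (2*(k:ℤ)+2, 0)‖ ^ 2) :=
    hsum.comp_injective hinj
  have htend := hsum'.tendsto_atTop_zero
  have hge : (1:ℝ) ≤ 0 := by
    apply le_of_tendsto_of_tendsto' tendsto_const_nhds htend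
    intro k
    have h1 := key k
    have h2 : (1:ℝ) ≤ (4*(k:ℝ)+5)/(4*(k:ℝ)+4) := by
      rw [le_div_iff₀ (by positivity)]
      have : (0:ℝ) ≤ (k:ℝ) := Nat.cast_nonneg k
      linarith
    linarith
  linarith
end
end

section
/- The representation ρ = ρ₁₀ is a *-representation: for all φ, ψ ∈ D, ⟨ρ(H₃)φ, ψ⟩ = ⟨φ, ρ(H₃)ψ⟩, ⟨ρ(F₃)φ, ψ⟩ = ⟨φ, ρ(F₃)ψ⟩, ⟨ρ(H₊)φ, ψ⟩ = ⟨φ, ρ(H₋)ψ⟩, and ⟨ρ(F₊)φ, ψ⟩ = ⟨φ, ρ(F₋)ψ⟩, where ⟨·,·⟩ is the inner product on D making (ξ_{ℓ,m}) orthonormal. -/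
noncomputable section

/-- The ambient space of finitely supported families; the representation space `D`
is the subspace of families supported in `S`. -/
abbrev V := (ℤ × ℤ) →₀ ℂ

/-- The basis vector `ξ_{ℓ,m}`, with the convention `ξ_{ℓ,m} = 0` for `(ℓ,m) ∉ S`. -/
def ξ (ℓ m : ℤ) : V := if inS (ℓ, m) then Finsupp.single (ℓ, m) 1 else 0

/-- Build a linear operator on `V` from its values on the basis vectors `ξ_{ℓ,m}`,
`(ℓ,m) ∈ S` (and `0` on basis vectors outside `S`). -/
def mkOp (f : ℤ → ℤ → V) : V →ₗ[ℂ] V :=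
  Finsupp.lsum ℂ fun p => LinearMap.toSpanSingleton ℂ V (if inS p then f p.1 p.2 else 0)

/-- `ρ(H₃) ξ_{ℓ,m} = m ξ_{ℓ,m}`. -/
def rhoH3 : V →ₗ[ℂ] V := mkOp fun ℓ m => (m : ℂ) • ξ ℓ m

/-- `ρ(H₊) ξ_{ℓ,m} = √((ℓ-m)(ℓ+m+1)) ξ_{ℓ,m+1}`. -/
def rhoHp : V →ₗ[ℂ] V := mkOp fun ℓ m => csqrt ((ℓ - m) * (ℓ + m + 1)) • ξ ℓ (m + 1)

/-- `ρ(H₋) ξ_{ℓ,m} = √((ℓ+m)(ℓ-m+1)) ξ_{ℓ,m-1}`. -/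
def rhoHm : V →ₗ[ℂ] V := mkOp fun ℓ m => csqrt ((ℓ + m) * (ℓ - m + 1)) • ξ ℓ (m - 1)

/-- `ρ(F₃) ξ_{ℓ,m} = C_ℓ √(ℓ²-m²) ξ_{ℓ-1,m} - C_{ℓ+1} √((ℓ+1)²-m²) ξ_{ℓ+1,m}`. -/
def rhoF3 : V →ₗ[ℂ] V := mkOp fun ℓ m =>
  (C ℓ * csqrt (ℓ ^ 2 - m ^ 2)) • ξ (ℓ - 1) m
    - (C (ℓ + 1) * csqrt ((ℓ + 1) ^ 2 - m ^ 2)) • ξ (ℓ + 1) m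

/-- `ρ(F₊) ξ_{ℓ,m} = C_ℓ √((ℓ-m)(ℓ-m-1)) ξ_{ℓ-1,m+1} + C_{ℓ+1} √((ℓ+m+1)(ℓ+m+2)) ξ_{ℓ+1,m+1}`. -/
def rhoFp : V →ₗ[ℂ] V := mkOp fun ℓ m =>
  (C ℓ * csqrt ((ℓ - m) * (ℓ - m - 1))) • ξ (ℓ - 1) (m + 1)
    + (C (ℓ + 1) * csqrt ((ℓ + m + 1) * (ℓ + m + 2))) • ξ (ℓ + 1) (m + 1)

/-- `ρ(F₋) ξ_{ℓ,m} = -C_ℓ √((ℓ+m)(ℓ+m-1)) ξ_{ℓ-1,m-1} - C_{ℓ+1} √((ℓ-m+1)(ℓ-m+2)) ξ_{ℓ+1,m-1}`. -/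
def rhoFm : V →ₗ[ℂ] V := mkOp fun ℓ m =>
  -((C ℓ * csqrt ((ℓ + m) * (ℓ + m - 1))) • ξ (ℓ - 1) (m - 1))
    - (C (ℓ + 1) * csqrt ((ℓ - m + 1) * (ℓ - m + 2))) • ξ (ℓ + 1) (m - 1)

/-- The inner product on `D` making `(ξ_{ℓ,m})` orthonormal. -/
def inn (φ ψ : V) : ℂ := ∑' p : ℤ × ℤ, (starRingEnd ℂ) (φ p) * ψ p

-- helpers
lemma conj_csqrt (a : ℤ) : (starRingEnd ℂ) (csqrt a) = csqrt a := Complex.conj_ofReal _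

lemma conj_C (ℓ : ℤ) : (starRingEnd ℂ) (C ℓ) = -C ℓ := by
  simp [C, map_mul, Complex.conj_I]

lemma csqrt_congr {a b : ℤ} (h : a = b) : csqrt a = csqrt b := by rw [h]

lemma inn_eq_right (φ ψ : V) : inn φ ψ = ∑ p ∈ ψ.support, (starRingEnd ℂ) (φ p) * ψ p :=
  tsum_eq_sum fun p hp => by simp [Finsupp.notMem_support_iff.mp hp]

lemma inn_eq_left (φ ψ : V) : inn φ ψ = ∑ p ∈ φ.support, (starRingEnd ℂ) (φ p) * ψ p :=
  tsum_eq_sum fun p hp => by simp [Finsupp.notMem_support_iff.mp hp]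

lemma inn_add_left (φ₁ φ₂ ψ : V) : inn (φ₁ + φ₂) ψ = inn φ₁ ψ + inn φ₂ ψ := by
  rw [inn_eq_right, inn_eq_right, inn_eq_right, ← Finset.sum_add_distrib]
  exact Finset.sum_congr rfl fun p _ => by simp [Finsupp.add_apply]; ring

lemma inn_smul_left (c : ℂ) (φ ψ : V) :
    inn (c • φ) ψ = (starRingEnd ℂ) c * inn φ ψ := by
  rw [inn_eq_right, inn_eq_right, Finset.mul_sum]
  exact Finset.sum_congr rfl fun p _ => by simp [Finsupp.smul_apply]; ring

lemma inn_neg_left (φ ψ : V) : inn (-φ) ψ = -inn φ ψ := by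
  have := inn_smul_left (-1) φ ψ; simpa using this

lemma inn_sub_left (φ₁ φ₂ ψ : V) : inn (φ₁ - φ₂) ψ = inn φ₁ ψ - inn φ₂ ψ := by
  rw [sub_eq_add_neg, inn_add_left, inn_neg_left, sub_eq_add_neg]

lemma inn_add_right (φ ψ₁ ψ₂ : V) : inn φ (ψ₁ + ψ₂) = inn φ ψ₁ + inn φ ψ₂ := by
  rw [inn_eq_left, inn_eq_left, inn_eq_left, ← Finset.sum_add_distrib]
  exact Finset.sum_congr rfl fun p _ => by simp [Finsupp.add_apply]; ring

lemma inn_smul_right (c : ℂ) (φ ψ : V) : inn φ (c • ψ) = c * inn φ ψ := by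
  rw [inn_eq_left, inn_eq_left, Finset.mul_sum]
  exact Finset.sum_congr rfl fun p _ => by simp [Finsupp.smul_apply]; ring

lemma inn_neg_right (φ ψ : V) : inn φ (-ψ) = -inn φ ψ := by
  have := inn_smul_right (-1) φ ψ; simpa using this

lemma inn_sub_right (φ ψ₁ ψ₂ : V) : inn φ (ψ₁ - ψ₂) = inn φ ψ₁ - inn φ ψ₂ := by
  rw [sub_eq_add_neg, inn_add_right, inn_neg_right, sub_eq_add_neg]

lemma inn_single_single (p q : ℤ × ℤ) :
    inn (Finsupp.single p 1) (Finsupp.single q 1) = if p = q then 1 else 0 := by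
  rw [inn_eq_left]
  rw [Finsupp.support_single_ne_zero p one_ne_zero]
  simp [Finsupp.single_apply, eq_comm]

lemma inn_xi (a b c d : ℤ) :
    inn (ξ a b) (ξ c d) = if a = c ∧ b = d ∧ inS (a, b) then 1 else 0 := by
  have z1 : ∀ ψ : V, inn 0 ψ = 0 := fun ψ => by rw [inn_eq_left]; simp
  have z2 : ∀ φ : V, inn φ 0 = 0 := fun φ => by rw [inn_eq_right]; simp
  unfold ξ
  by_cases h1 : inS (a, b) <;> by_cases h2 : inS (c, d)
  · rw [if_pos h1, if_pos h2, inn_single_single]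
    simp only [Prod.ext_iff]
    split_ifs <;> tauto
  · rw [if_pos h1, if_neg h2, z2, eq_comm, if_neg]
    rintro ⟨rfl, rfl, -⟩; exact h2 h1
  · rw [if_neg h1, z1, eq_comm, if_neg]
    exact fun hx => h1 hx.2.2
  · rw [if_neg h1, z1, eq_comm, if_neg]
    exact fun hx => h1 hx.2.2

lemma mkOp_single (f : ℤ → ℤ → V) (p : ℤ × ℤ) (a : ℂ) :
    mkOp f (Finsupp.single p a) = a • (if inS p then f p.1 p.2 else 0) := by
  simp [mkOp, Finsupp.sum_single_index, LinearMap.toSpanSingleton_apply]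

lemma mkOp_xi (f : ℤ → ℤ → V) {ℓ m : ℤ} (h : inS (ℓ, m)) :
    mkOp f (Finsupp.single (ℓ, m) 1) = f ℓ m := by
  rw [mkOp_single]; simp [h]

lemma inn_expand_right (χ ψ : V) :
    inn χ ψ = ∑ q ∈ ψ.support, ψ q * inn χ (Finsupp.single q 1) := by
  rw [inn_eq_right]
  refine Finset.sum_congr rfl fun q _ => ?_
  rw [inn_eq_right χ (Finsupp.single q 1), Finsupp.support_single_ne_zero q one_ne_zero]
  simp; ring

lemma inn_expand_left (φ χ : V) :
    inn φ χ = ∑ p ∈ φ.support, (starRingEnd ℂ) (φ p) * inn (Finsupp.single p 1) χ := by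
  rw [inn_eq_left]
  refine Finset.sum_congr rfl fun p _ => ?_
  rw [inn_eq_left (Finsupp.single p 1) χ, Finsupp.support_single_ne_zero p one_ne_zero]
  simp

lemma inn_opL (A : V →ₗ[ℂ] V) (φ ψ : V) :
    inn (A φ) ψ = ∑ p ∈ φ.support, (starRingEnd ℂ) (φ p) * inn (A (Finsupp.single p 1)) ψ := by
  conv_lhs => rw [← Finsupp.sum_single φ]
  rw [Finsupp.sum, map_sum, inn_eq_right]
  have : ∀ q, (∑ p ∈ φ.support, A (Finsupp.single p (φ p))) q
      = ∑ p ∈ φ.support, φ p * (A (Finsupp.single p 1)) q := by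
    intro q
    rw [Finsupp.finset_sum_apply]
    refine Finset.sum_congr rfl fun p _ => ?_
    rw [show Finsupp.single p (φ p) = φ p • Finsupp.single p 1 by
      rw [Finsupp.smul_single, smul_eq_mul, mul_one], map_smul]
    simp
  simp_rw [this, map_sum, Finset.sum_mul]
  rw [Finset.sum_comm]
  refine Finset.sum_congr rfl fun p _ => ?_
  rw [inn_eq_right, Finset.mul_sum]
  exact Finset.sum_congr rfl fun q _ => by simp; ring

lemma inn_opR (B : V →ₗ[ℂ] V) (φ ψ : V) :
    inn φ (B ψ) = ∑ q ∈ ψ.support, ψ q * inn φ (B (Finsupp.single q 1)) := by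
  conv_lhs => rw [← Finsupp.sum_single ψ]
  rw [Finsupp.sum, map_sum, inn_eq_left]
  have : ∀ p, (∑ q ∈ ψ.support, B (Finsupp.single q (ψ q))) p
      = ∑ q ∈ ψ.support, ψ q * (B (Finsupp.single q 1)) p := by
    intro p
    rw [Finsupp.finset_sum_apply]
    refine Finset.sum_congr rfl fun q _ => ?_
    rw [show Finsupp.single q (ψ q) = ψ q • Finsupp.single q 1 by
      rw [Finsupp.smul_single, smul_eq_mul, mul_one], map_smul]
    simp
  simp_rw [this, Finset.mul_sum]
  rw [Finset.sum_comm]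
  refine Finset.sum_congr rfl fun q _ => ?_
  rw [inn_eq_left, Finset.mul_sum]
  exact Finset.sum_congr rfl fun p _ => by ring

lemma key (A B : V →ₗ[ℂ] V)
    (h : ∀ p, inS p → ∀ q, inS q →
      inn (A (Finsupp.single p 1)) (Finsupp.single q 1)
        = inn (Finsupp.single p 1) (B (Finsupp.single q 1))) :
    ∀ φ ∈ Finsupp.supported ℂ ℂ {p : ℤ × ℤ | inS p},
    ∀ ψ ∈ Finsupp.supported ℂ ℂ {p : ℤ × ℤ | inS p},
      inn (A φ) ψ = inn φ (B ψ) := by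
  intro φ hφ ψ hψ
  rw [inn_opL A φ ψ, inn_opR B φ ψ]
  have h1 : ∀ p ∈ φ.support, inS p := fun p hp => hφ hp
  have h2 : ∀ q ∈ ψ.support, inS q := fun q hq => hψ hq
  calc ∑ p ∈ φ.support, (starRingEnd ℂ) (φ p) * inn (A (Finsupp.single p 1)) ψ
      = ∑ p ∈ φ.support, ∑ q ∈ ψ.support,
          (starRingEnd ℂ) (φ p) * (ψ q * inn (A (Finsupp.single p 1)) (Finsupp.single q 1)) := by
        refine Finset.sum_congr rfl fun p _ => ?_
        rw [inn_expand_right (A (Finsupp.single p 1)) ψ, Finset.mul_sum]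
    _ = ∑ q ∈ ψ.support, ψ q * ∑ p ∈ φ.support,
          (starRingEnd ℂ) (φ p) * inn (Finsupp.single p 1) (B (Finsupp.single q 1)) := by
        rw [Finset.sum_comm]
        refine Finset.sum_congr rfl fun q hq => ?_
        rw [Finset.mul_sum]
        refine Finset.sum_congr rfl fun p hp => ?_
        rw [h p (h1 p hp) q (h2 q hq)]; ring
    _ = ∑ q ∈ ψ.support, ψ q * inn φ (B (Finsupp.single q 1)) := by
        refine Finset.sum_congr rfl fun q _ => ?_
        rw [inn_expand_left φ (B (Finsupp.single q 1))]


lemma xi_pos {ℓ m : ℤ} (h : inS (ℓ, m)) : ξ ℓ m = Finsupp.single (ℓ, m) 1 := if_pos h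

lemma pair_H3 : ∀ p : ℤ × ℤ, inS p → ∀ q : ℤ × ℤ, inS q →
    inn (rhoH3 (Finsupp.single p 1)) (Finsupp.single q 1)
      = inn (Finsupp.single p 1) (rhoH3 (Finsupp.single q 1)) := by
  rintro ⟨ℓ, m⟩ hp ⟨ℓ', m'⟩ hq
  simp only [rhoH3, mkOp_xi _ hp, mkOp_xi _ hq]
  rw [← xi_pos hp, ← xi_pos hq]
  rw [inn_smul_left, inn_smul_right, inn_xi, map_intCast]
  split_ifs with hc
  · rw [hc.2.1]
  · ring

lemma pair_H : ∀ p : ℤ × ℤ, inS p → ∀ q : ℤ × ℤ, inS q →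
    inn (rhoHp (Finsupp.single p 1)) (Finsupp.single q 1)
      = inn (Finsupp.single p 1) (rhoHm (Finsupp.single q 1)) := by
  rintro ⟨ℓ, m⟩ hp ⟨ℓ', m'⟩ hq
  simp only [rhoHp, rhoHm, mkOp_xi _ hp, mkOp_xi _ hq]
  rw [← xi_pos hp, ← xi_pos hq]
  rw [inn_smul_left, inn_smul_right, inn_xi, inn_xi, conj_csqrt]
  have d1 : (ℓ = ℓ' ∧ m + 1 = m' ∧ inS (ℓ, m + 1)) ↔ (ℓ' = ℓ ∧ m' = m + 1) := by
    constructor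
    · rintro ⟨e1, e2, -⟩; exact ⟨e1.symm, e2.symm⟩
    · rintro ⟨rfl, rfl⟩; exact ⟨rfl, rfl, hq⟩
  have d2 : (ℓ = ℓ' ∧ m = m' - 1 ∧ inS (ℓ, m)) ↔ (ℓ' = ℓ ∧ m' = m + 1) := by
    constructor
    · rintro ⟨e1, e2, -⟩; exact ⟨e1.symm, by omega⟩
    · rintro ⟨rfl, rfl⟩; exact ⟨rfl, by omega, hp⟩
  simp only [d1, d2]
  split_ifs with hc
  · obtain ⟨rfl, rfl⟩ := hc
    simp only [mul_one]
    exact csqrt_congr (by ring)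
  · ring

lemma pair_F3 : ∀ p : ℤ × ℤ, inS p → ∀ q : ℤ × ℤ, inS q →
    inn (rhoF3 (Finsupp.single p 1)) (Finsupp.single q 1)
      = inn (Finsupp.single p 1) (rhoF3 (Finsupp.single q 1)) := by
  rintro ⟨ℓ, m⟩ hp ⟨ℓ', m'⟩ hq
  simp only [rhoF3, mkOp_xi _ hp, mkOp_xi _ hq]
  rw [← xi_pos hp, ← xi_pos hq]
  rw [inn_sub_left, inn_sub_right, inn_smul_left, inn_smul_left,
    inn_smul_right, inn_smul_right, inn_xi, inn_xi, inn_xi, inn_xi]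
  simp only [map_mul, conj_C, conj_csqrt]
  have d1 : (ℓ - 1 = ℓ' ∧ m = m' ∧ inS (ℓ - 1, m)) ↔ (ℓ' = ℓ - 1 ∧ m' = m) := by
    constructor
    · rintro ⟨e1, e2, -⟩; exact ⟨e1.symm, e2.symm⟩
    · rintro ⟨rfl, rfl⟩; exact ⟨rfl, rfl, hq⟩
  have d2 : (ℓ + 1 = ℓ' ∧ m = m' ∧ inS (ℓ + 1, m)) ↔ (ℓ' = ℓ + 1 ∧ m' = m) := by
    constructor
    · rintro ⟨e1, e2, -⟩; exact ⟨e1.symm, e2.symm⟩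
    · rintro ⟨rfl, rfl⟩; exact ⟨rfl, rfl, hq⟩
  have d3 : (ℓ = ℓ' - 1 ∧ m = m' ∧ inS (ℓ, m)) ↔ (ℓ' = ℓ + 1 ∧ m' = m) := by
    constructor
    · rintro ⟨e1, e2, -⟩; exact ⟨by omega, e2.symm⟩
    · rintro ⟨rfl, rfl⟩; exact ⟨by omega, rfl, hp⟩
  have d4 : (ℓ = ℓ' + 1 ∧ m = m' ∧ inS (ℓ, m)) ↔ (ℓ' = ℓ - 1 ∧ m' = m) := by
    constructor
    · rintro ⟨e1, e2, -⟩; exact ⟨by omega, e2.symm⟩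
    · rintro ⟨rfl, rfl⟩; exact ⟨by omega, rfl, hp⟩
  simp only [d1, d2, d3, d4]
  split_ifs with hA hB hB
  · omega
  · obtain ⟨rfl, rfl⟩ := hA
    rw [show (ℓ : ℤ) - 1 + 1 = ℓ by ring]
    ring
  · obtain ⟨rfl, rfl⟩ := hB
    ring
  · ring

lemma pair_F : ∀ p : ℤ × ℤ, inS p → ∀ q : ℤ × ℤ, inS q →
    inn (rhoFp (Finsupp.single p 1)) (Finsupp.single q 1)
      = inn (Finsupp.single p 1) (rhoFm (Finsupp.single q 1)) := by
  rintro ⟨ℓ, m⟩ hp ⟨ℓ', m'⟩ hq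
  simp only [rhoFp, rhoFm, mkOp_xi _ hp, mkOp_xi _ hq]
  rw [← xi_pos hp, ← xi_pos hq]
  rw [inn_add_left, inn_sub_right, inn_neg_right, inn_smul_left, inn_smul_left,
    inn_smul_right, inn_smul_right, inn_xi, inn_xi, inn_xi, inn_xi]
  simp only [map_mul, conj_C, conj_csqrt]
  have d1 : (ℓ - 1 = ℓ' ∧ m + 1 = m' ∧ inS (ℓ - 1, m + 1)) ↔ (ℓ' = ℓ - 1 ∧ m' = m + 1) := by
    constructor
    · rintro ⟨e1, e2, -⟩; exact ⟨e1.symm, e2.symm⟩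
    · rintro ⟨rfl, rfl⟩; exact ⟨rfl, rfl, hq⟩
  have d2 : (ℓ + 1 = ℓ' ∧ m + 1 = m' ∧ inS (ℓ + 1, m + 1)) ↔ (ℓ' = ℓ + 1 ∧ m' = m + 1) := by
    constructor
    · rintro ⟨e1, e2, -⟩; exact ⟨e1.symm, e2.symm⟩
    · rintro ⟨rfl, rfl⟩; exact ⟨rfl, rfl, hq⟩
  have d3 : (ℓ = ℓ' - 1 ∧ m = m' - 1 ∧ inS (ℓ, m)) ↔ (ℓ' = ℓ + 1 ∧ m' = m + 1) := by
    constructor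
    · rintro ⟨e1, e2, -⟩; exact ⟨by omega, by omega⟩
    · rintro ⟨rfl, rfl⟩; exact ⟨by omega, by omega, hp⟩
  have d4 : (ℓ = ℓ' + 1 ∧ m = m' - 1 ∧ inS (ℓ, m)) ↔ (ℓ' = ℓ - 1 ∧ m' = m + 1) := by
    constructor
    · rintro ⟨e1, e2, -⟩; exact ⟨by omega, by omega⟩
    · rintro ⟨rfl, rfl⟩; exact ⟨by omega, by omega, hp⟩
  simp only [d1, d2, d3, d4]
  split_ifs with hA hB hB
  · omega
  · obtain ⟨rfl, rfl⟩ := hA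
    rw [show (ℓ : ℤ) - 1 + 1 = ℓ by ring,
      show (ℓ - 1 - (m + 1) + 1) * (ℓ - 1 - (m + 1) + 2) = (ℓ - m) * (ℓ - m - 1) from by ring]
    ring
  · obtain ⟨rfl, rfl⟩ := hB
    rw [show (ℓ + 1 + (m + 1)) * (ℓ + 1 + (m + 1) - 1) = (ℓ + m + 1) * (ℓ + m + 2) from by ring]
    ring
  · ring

/-- `ρ₁₀` is a *-representation: on the subspace `D` of families supported in `S`,
`ρ(H₃)` and `ρ(F₃)` are symmetric and `ρ(H₊)` (resp. `ρ(F₊)`) is adjoint to `ρ(H₋)`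
(resp. `ρ(F₋)`) with respect to the inner product making `(ξ_{ℓ,m})` orthonormal. -/
theorem rho10_star_representation :
    ∀ φ ∈ Finsupp.supported ℂ ℂ {p : ℤ × ℤ | inS p},
    ∀ ψ ∈ Finsupp.supported ℂ ℂ {p : ℤ × ℤ | inS p},
      inn (rhoH3 φ) ψ = inn φ (rhoH3 ψ) ∧
      inn (rhoF3 φ) ψ = inn φ (rhoF3 ψ) ∧
      inn (rhoHp φ) ψ = inn φ (rhoHm ψ) ∧
      inn (rhoFp φ) ψ = inn φ (rhoFm ψ) := by
  intro φ hφ ψ hψ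
  exact ⟨key rhoH3 rhoH3 pair_H3 φ hφ ψ hψ,
    key rhoF3 rhoF3 pair_F3 φ hφ ψ hψ,
    key rhoHp rhoHm pair_H φ hφ ψ hψ,
    key rhoFp rhoFm pair_F φ hφ ψ hψ⟩

end
end

section
/- Let (x_ℓ)_{ℓ≥1} be the sequence of real numbers defined by x₁ = 1, x₂ = 0, and for ℓ ≥ 2, x_{ℓ+1} = −[ √(ℓ²−1)·√(4(ℓ+1)²−1) / ( √(4ℓ²−1)·√((ℓ+1)²−1) ) ] · [ √((ℓ−1)ℓ) / √((ℓ+1)(ℓ+2)) ] · x_{ℓ−1} (this is the recurrence C_{ℓ+1}·√((ℓ+1)(ℓ+2))·x_{ℓ+1} + C_ℓ·√((ℓ−1)ℓ)·x_{ℓ−1} = 0). Then ∑_{ℓ≥1} x_ℓ² < ∞. Consequently ξ⁺ := (x_{ℓ,m}) with x_{ℓ,1} = x_ℓ and x_{ℓ,m} = 0 for m ≠ 1 is a nonzero square-summable family on S satisfying, coefficientwise, ρ(H₃)ξ⁺ = ξ⁺ and ρ(F₋)ξ⁺ = 0. -/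
noncomputable section

lemma key_bound (x : ℕ → ℝ) (h1 : x 1 = 1) (h2 : x 2 = 0)
    (hrec : ∀ ℓ : ℕ, 2 ≤ ℓ →
      x (ℓ + 1) =
        -(Real.sqrt ((ℓ : ℝ) ^ 2 - 1) * Real.sqrt (4 * ((ℓ : ℝ) + 1) ^ 2 - 1) /
            (Real.sqrt (4 * (ℓ : ℝ) ^ 2 - 1) * Real.sqrt (((ℓ : ℝ) + 1) ^ 2 - 1))) *
          (Real.sqrt (((ℓ : ℝ) - 1) * (ℓ : ℝ)) /
            Real.sqrt (((ℓ : ℝ) + 1) * ((ℓ : ℝ) + 2))) * x (ℓ - 1)) :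
    ∀ n : ℕ, ((n : ℝ) + 1) * ((n : ℝ) + 2) * x (n + 1) ^ 2 ≤ 2 := by
  intro n
  induction n using Nat.strong_induction_on with
  | _ n ih =>
    match n with
    | 0 => norm_num [h1]
    | 1 => norm_num [h2]
    | (k + 2) =>
      have hk := ih k (by omega)
      have hx := hrec (k + 2) (by omega)
      set L : ℝ := (k : ℝ) + 2 with hL
      have hcast : ((k + 2 : ℕ) : ℝ) = L := by push_cast [hL]; ring
      rw [hcast] at hx
      have ha : (0:ℝ) ≤ L ^ 2 - 1 := by nlinarith [Nat.cast_nonneg (α := ℝ) k]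
      have hb : (0:ℝ) < 4 * (L + 1) ^ 2 - 1 := by nlinarith [Nat.cast_nonneg (α := ℝ) k]
      have hc : (0:ℝ) < 4 * L ^ 2 - 1 := by nlinarith [Nat.cast_nonneg (α := ℝ) k]
      have hd : (0:ℝ) < (L + 1) ^ 2 - 1 := by nlinarith [Nat.cast_nonneg (α := ℝ) k]
      have he : (0:ℝ) ≤ (L - 1) * L := by nlinarith [Nat.cast_nonneg (α := ℝ) k]
      have hf : (0:ℝ) < (L + 1) * (L + 2) := by nlinarith [Nat.cast_nonneg (α := ℝ) k]
      have hsq : x (k + 2 + 1) ^ 2 =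
          (L ^ 2 - 1) * (4 * (L + 1) ^ 2 - 1) / ((4 * L ^ 2 - 1) * ((L + 1) ^ 2 - 1)) *
          ((L - 1) * L / ((L + 1) * (L + 2))) * x (k + 1) ^ 2 := by
        rw [hx]
        rw [show k + 2 - 1 = k + 1 from rfl]
        rw [neg_mul, neg_mul, neg_pow, mul_pow, mul_pow]
        rw [div_pow, div_pow, mul_pow, mul_pow]
        rw [Real.sq_sqrt ha, Real.sq_sqrt hb.le, Real.sq_sqrt hc.le, Real.sq_sqrt hd.le,
          Real.sq_sqrt he, Real.sq_sqrt hf.le]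
        ring
      have hkk : (L - 1) * L * x (k + 1) ^ 2 ≤ 2 := by
        have h' : ((k : ℝ) + 1) * ((k : ℝ) + 2) = (L - 1) * L := by rw [hL]; ring
        linarith [h' ▸ hk]
      have hratio : (L ^ 2 - 1) * (4 * (L + 1) ^ 2 - 1) /
          ((4 * L ^ 2 - 1) * ((L + 1) ^ 2 - 1)) ≤ 1 := by
        rw [div_le_one (by positivity)]
        nlinarith [Nat.cast_nonneg (α := ℝ) k]
      have hcast2 : ((k + 2 : ℕ) : ℝ) + 1 = L + 1 := by push_cast [hL]; ring
      have hcast3 : ((k + 2 : ℕ) : ℝ) + 2 = L + 2 := by push_cast [hL]; ring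
      rw [hcast2, hcast3, hsq]
      have heq : (L + 1) * (L + 2) *
          ((L ^ 2 - 1) * (4 * (L + 1) ^ 2 - 1) / ((4 * L ^ 2 - 1) * ((L + 1) ^ 2 - 1)) *
            ((L - 1) * L / ((L + 1) * (L + 2))) * x (k + 1) ^ 2) =
          (L ^ 2 - 1) * (4 * (L + 1) ^ 2 - 1) / ((4 * L ^ 2 - 1) * ((L + 1) ^ 2 - 1)) *
            ((L - 1) * L * x (k + 1) ^ 2) := by
        have hf' : (L + 1) * (L + 2) ≠ 0 := hf.ne'
        linear_combination ((L ^ 2 - 1) * (4 * (L + 1) ^ 2 - 1) / ((4 * L ^ 2 - 1) * ((L + 1) ^ 2 - 1)) * ((L - 1) * L * x (k + 1) ^ 2)) * mul_inv_cancel₀ hf'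
      rw [heq]
      calc (L ^ 2 - 1) * (4 * (L + 1) ^ 2 - 1) / ((4 * L ^ 2 - 1) * ((L + 1) ^ 2 - 1)) *
            ((L - 1) * L * x (k + 1) ^ 2)
          ≤ 1 * ((L - 1) * L * x (k + 1) ^ 2) :=
            mul_le_mul_of_nonneg_right hratio (by positivity)
        _ ≤ 2 := by linarith

lemma sq_summable (x : ℕ → ℝ) (h1 : x 1 = 1) (h2 : x 2 = 0)
    (hrec : ∀ ℓ : ℕ, 2 ≤ ℓ →
      x (ℓ + 1) =
        -(Real.sqrt ((ℓ : ℝ) ^ 2 - 1) * Real.sqrt (4 * ((ℓ : ℝ) + 1) ^ 2 - 1) /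
            (Real.sqrt (4 * (ℓ : ℝ) ^ 2 - 1) * Real.sqrt (((ℓ : ℝ) + 1) ^ 2 - 1))) *
          (Real.sqrt (((ℓ : ℝ) - 1) * (ℓ : ℝ)) /
            Real.sqrt (((ℓ : ℝ) + 1) * ((ℓ : ℝ) + 2))) * x (ℓ - 1)) :
    Summable (fun ℓ : ℕ => x (ℓ + 1) ^ 2) := by
  have hmaj : Summable (fun n : ℕ => 2 * (1 / ((n : ℝ) + 1) ^ 2)) := by
    have h0 : Summable (fun n : ℕ => 1 / ((n : ℝ)) ^ 2) :=
      Real.summable_one_div_nat_pow.mpr (by norm_num)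
    have := (summable_nat_add_iff 1).mpr h0
    exact (this.congr (by intro n; push_cast; ring)).mul_left 2
  apply Summable.of_nonneg_of_le (fun n => sq_nonneg _) _ hmaj
  intro n
  have hkb := key_bound x h1 h2 hrec n
  have h1' : (0:ℝ) < (n : ℝ) + 1 := by positivity
  have h2' : (0:ℝ) < (n : ℝ) + 2 := by positivity
  rw [mul_one_div, le_div_iff₀ (by positivity)]
  nlinarith [sq_nonneg (x (n+1))]

/-- Let `(x_ℓ)` be the real sequence defined by `x 1 = 1`, `x 2 = 0` and, for `ℓ ≥ 2`,
`x (ℓ+1) = -[√(ℓ²-1)√(4(ℓ+1)²-1)/(√(4ℓ²-1)√((ℓ+1)²-1))]·[√((ℓ-1)ℓ)/√((ℓ+1)(ℓ+2))]·x (ℓ-1)`.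
Then `∑ x_ℓ² < ∞`, and the family `ξ⁺` with coefficients `x_ℓ` at `(ℓ,1)` (and `0`
elsewhere) is a nonzero square-summable family satisfying, coefficientwise,
`ρ(H₃)ξ⁺ = ξ⁺` and `ρ(F₋)ξ⁺ = 0`. -/
theorem xiplus_highest_weight_vector (x : ℕ → ℝ) (h1 : x 1 = 1) (h2 : x 2 = 0)
    (hrec : ∀ ℓ : ℕ, 2 ≤ ℓ →
      x (ℓ + 1) =
        -(Real.sqrt ((ℓ : ℝ) ^ 2 - 1) * Real.sqrt (4 * ((ℓ : ℝ) + 1) ^ 2 - 1) /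
            (Real.sqrt (4 * (ℓ : ℝ) ^ 2 - 1) * Real.sqrt (((ℓ : ℝ) + 1) ^ 2 - 1))) *
          (Real.sqrt (((ℓ : ℝ) - 1) * (ℓ : ℝ)) /
            Real.sqrt (((ℓ : ℝ) + 1) * ((ℓ : ℝ) + 2))) * x (ℓ - 1)) :
    Summable (fun ℓ : ℕ => x (ℓ + 1) ^ 2) ∧
    ∀ xiplus : ℤ × ℤ → ℂ,
      (∀ p : ℤ × ℤ, xiplus p = if 1 ≤ p.1 ∧ p.2 = 1 then ((x p.1.toNat : ℝ) : ℂ) else 0) →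
      (xiplus ≠ 0 ∧
        Summable (fun p : ℤ × ℤ => ‖xiplus p‖ ^ 2) ∧
        (∀ ℓ m : ℤ, 1 ≤ ℓ → |m| ≤ ℓ → (m : ℂ) * xiplus (ℓ, m) = xiplus (ℓ, m)) ∧
        (∀ ℓ m : ℤ, 1 ≤ ℓ → |m| ≤ ℓ →
          C (ℓ + 1) * csqrt ((ℓ + m + 1) * (ℓ + m + 2)) * xiplus (ℓ + 1, m + 1)
            + C ℓ * csqrt ((ℓ - m - 1) * (ℓ - m)) * xiplus (ℓ - 1, m + 1) = 0)) := by
  have hsum := sq_summable x h1 h2 hrec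
  refine ⟨hsum, fun xiplus hxi => ⟨?_, ?_, ?_, ?_⟩⟩
  · -- nonzero
    intro hz
    have : xiplus (1, 1) = 0 := by rw [hz]; rfl
    rw [hxi (1, 1)] at this
    simp [h1] at this
  · -- summable
    set e : ℕ → ℤ × ℤ := fun n => ((n : ℤ) + 1, 1) with he
    have hinj : Function.Injective e := by
      intro a b hab
      simp only [he, Prod.mk.injEq] at hab
      omega
    have hzero : ∀ p : ℤ × ℤ, p ∉ Set.range e → ‖xiplus p‖ ^ 2 = 0 := by
      intro p hp
      rw [hxi p]
      split
      · next h =>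
        exfalso
        apply hp
        refine ⟨(p.1 - 1).toNat, ?_⟩
        simp only [he]
        have : ((p.1 - 1).toNat : ℤ) = p.1 - 1 := by omega
        rw [Prod.ext_iff]
        constructor
        · simp [this]; omega
        · exact h.2.symm
      · simp
    rw [← Function.Injective.summable_iff hinj hzero]
    apply hsum.congr
    intro n
    have h2' : ((n : ℤ) + 1).toNat = n + 1 := by omega
    have hv : xiplus ((n : ℤ) + 1, 1) = ((x (n + 1) : ℝ) : ℂ) := by
      rw [hxi ((n : ℤ) + 1, 1), if_pos ⟨by omega, rfl⟩]
      norm_num [h2']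
    simp only [Function.comp, he, hv]
    rw [Complex.norm_real, Real.norm_eq_abs, sq_abs]
  · -- H3
    intro ℓ m hℓ hm
    rw [hxi (ℓ, m)]
    split
    · next h =>
      have hm1 : m = 1 := h.2
      rw [hm1]; norm_num
    · simp
  · -- F-
    intro ℓ m hℓ hm
    by_cases hm0 : m = 0
    · subst hm0
      have v1 : xiplus (ℓ + 1, 0 + 1) = ((x (ℓ + 1).toNat : ℝ) : ℂ) := by
        rw [hxi (ℓ + 1, 0 + 1)]
        exact if_pos ⟨by omega, by norm_num⟩
      by_cases hℓ1 : ℓ = 1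
      · subst hℓ1
        have v2 : xiplus ((1:ℤ) - 1, 0 + 1) = 0 := by
          rw [hxi ((1:ℤ) - 1, 0 + 1)]
          refine if_neg (fun h => ?_)
          have h1' : (1:ℤ) ≤ 1 - 1 := h.1
          omega
        rw [v1, v2]
        have : ((1:ℤ) + 1).toNat = 2 := rfl
        rw [this, h2]
        norm_num
      · -- ℓ ≥ 2
        obtain ⟨n, rfl⟩ : ∃ n : ℕ, (n : ℤ) = ℓ := ⟨ℓ.toNat, by omega⟩
        have hn : 2 ≤ n := by omega
        have v2 : xiplus ((n:ℤ) - 1, 0 + 1) = ((x ((n:ℤ) - 1).toNat : ℝ) : ℂ) := by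
          rw [hxi ((n:ℤ) - 1, 0 + 1)]
          exact if_pos ⟨by omega, by norm_num⟩
        rw [v1, v2]
        have e1 : ((n : ℤ) + 1).toNat = n + 1 := by omega
        have e2 : ((n : ℤ) - 1).toNat = n - 1 := by omega
        rw [e1, e2]
        have hn2 : (2:ℝ) ≤ (n:ℝ) := by exact_mod_cast hn
        have t1 : ((Real.sqrt (4 * ((n:ℝ) + 1) ^ 2 - 1) : ℝ) : ℂ) ≠ 0 := by
          refine Complex.ofReal_ne_zero.mpr (ne_of_gt (Real.sqrt_pos.mpr ?_)); nlinarith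
        have t2 : ((Real.sqrt (4 * (n:ℝ) ^ 2 - 1) : ℝ) : ℂ) ≠ 0 := by
          refine Complex.ofReal_ne_zero.mpr (ne_of_gt (Real.sqrt_pos.mpr ?_)); nlinarith
        have t3 : ((Real.sqrt (((n:ℝ) + 1) ^ 2 - 1) : ℝ) : ℂ) ≠ 0 := by
          refine Complex.ofReal_ne_zero.mpr (ne_of_gt (Real.sqrt_pos.mpr ?_)); nlinarith
        have t4 : ((Real.sqrt ((n:ℝ) + 1) : ℝ) : ℂ) ≠ 0 := by
          refine Complex.ofReal_ne_zero.mpr (ne_of_gt (Real.sqrt_pos.mpr ?_)); nlinarith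
        have t5 : ((Real.sqrt ((n:ℝ) + 2) : ℝ) : ℂ) ≠ 0 := by
          refine Complex.ofReal_ne_zero.mpr (ne_of_gt (Real.sqrt_pos.mpr ?_)); nlinarith
        rw [hrec n hn]
        simp only [C, csqrt]
        push_cast
        field_simp
        have t1' : ((√(3 + (n:ℝ) * 8 + (n:ℝ) ^ 2 * 4) : ℝ) : ℂ) ≠ 0 := by
          refine Complex.ofReal_ne_zero.mpr (ne_of_gt (Real.sqrt_pos.mpr ?_)); positivity
        ring_nf
        linear_combination (-(Complex.I * ((√(-1 + (n:ℝ) ^ 2) : ℝ) : ℂ) * ((x (n - 1) : ℝ) : ℂ) * ((√(2 + (n:ℝ) * 3 + (n:ℝ) ^ 2) : ℝ) : ℂ) * ((√(-(n:ℝ) + (n:ℝ) ^ 2) : ℝ) : ℂ) * (((√(-1 + (n:ℝ) ^ 2 * 4) : ℝ) : ℂ))⁻¹)) * mul_inv_cancel₀ t1'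
    · -- m ≠ 0 : both coefficients vanish
      have w1 : xiplus (ℓ + 1, m + 1) = 0 := by
        rw [hxi (ℓ + 1, m + 1)]
        refine if_neg (fun h => ?_)
        have h2' : m + 1 = 1 := h.2
        omega
      have w2 : xiplus (ℓ - 1, m + 1) = 0 := by
        rw [hxi (ℓ - 1, m + 1)]
        refine if_neg (fun h => ?_)
        have h2' : m + 1 = 1 := h.2
        omega
      rw [w1, w2]
      ring

end
end

section
/- Let m₀ ≤ 0 be an integer, let ℓ₀ := 2 − m₀, and let (u_ℓ)_{ℓ ≥ ℓ₀−1} be strictly positive real numbers satisfying, for all ℓ ≥ ℓ₀, u_{ℓ+1} = u_{ℓ−1} · [ (ℓ²−1)·(4(ℓ+1)²−1)·(ℓ−m₀)·(ℓ−m₀+1) ] / [ (4ℓ²−1)·((ℓ+1)²−1)·(ℓ+m₀+1)·(ℓ+m₀) ]. Then the series ∑_{ℓ ≥ ℓ₀−1} u_ℓ diverges. -/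
/-- Key ratio bound: for real `x ≥ 2`, `m ≤ 0`, `x + m ≥ 2`, the recurrence ratio is
bounded below by `H(x+2)/H(x)` where `H t = (t²+1)/t²`. -/
lemma ratio_ge (x m : ℝ) (hx : 2 ≤ x) (hm : m ≤ 0) (hxm : 2 ≤ x + m) :
    (((x + 2) ^ 2 + 1) / (x + 2) ^ 2) / ((x ^ 2 + 1) / x ^ 2) ≤
      ((x ^ 2 - 1) * (4 * (x + 1) ^ 2 - 1) * (x - m) * (x - m + 1)) /
        ((4 * x ^ 2 - 1) * ((x + 1) ^ 2 - 1) * (x + m + 1) * (x + m)) := by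
  have hx0 : (0:ℝ) < x := by linarith
  have hxm0 : (0:ℝ) < x + m := by linarith
  have hA : (0:ℝ) < (4 * x ^ 2 - 1) * ((x + 1) ^ 2 - 1) * (x + m + 1) * (x + m) := by
    have h1 : (0:ℝ) < 4 * x ^ 2 - 1 := by nlinarith
    have h2 : (0:ℝ) < (x + 1) ^ 2 - 1 := by nlinarith
    positivity
  have hfrac : (((x + 2) ^ 2 + 1) / (x + 2) ^ 2) / ((x ^ 2 + 1) / x ^ 2)
      = (((x + 2) ^ 2 + 1) * x ^ 2) / ((x + 2) ^ 2 * (x ^ 2 + 1)) := by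
    field_simp
  rw [hfrac, div_le_div_iff₀ (by positivity) hA]
  have key : (((x + 2) ^ 2 + 1) * x ^ 2) * ((4 * x ^ 2 - 1) * ((x + 1) ^ 2 - 1)) ≤
      ((x ^ 2 - 1) * (4 * (x + 1) ^ 2 - 1)) * ((x + 2) ^ 2 * (x ^ 2 + 1)) := by
    nlinarith [sq_nonneg x, sq_nonneg (x - 2), mul_nonneg (sub_nonneg.2 hx) (sub_nonneg.2 hx),
      pow_pos hx0 3, mul_nonneg (mul_nonneg (sub_nonneg.2 hx) (sub_nonneg.2 hx)) (sub_nonneg.2 hx)]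
  have hBge : (x + m + 1) * (x + m) ≤ (x - m) * (x - m + 1) := by nlinarith
  calc (((x + 2) ^ 2 + 1) * x ^ 2) * ((4 * x ^ 2 - 1) * ((x + 1) ^ 2 - 1) * (x + m + 1) * (x + m))
      = (((x + 2) ^ 2 + 1) * x ^ 2) * ((4 * x ^ 2 - 1) * ((x + 1) ^ 2 - 1)) *
        ((x + m + 1) * (x + m)) := by ring
    _ ≤ ((x ^ 2 - 1) * (4 * (x + 1) ^ 2 - 1)) * ((x + 2) ^ 2 * (x ^ 2 + 1)) *
        ((x + m + 1) * (x + m)) := by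
        apply mul_le_mul_of_nonneg_right key (by positivity)
    _ ≤ ((x ^ 2 - 1) * (4 * (x + 1) ^ 2 - 1)) * ((x + 2) ^ 2 * (x ^ 2 + 1)) *
        ((x - m) * (x - m + 1)) := by
        have hpos1 : (0:ℝ) ≤ (x ^ 2 - 1) * (4 * (x + 1) ^ 2 - 1) := by nlinarith
        apply mul_le_mul_of_nonneg_left hBge (by positivity)
    _ = (x ^ 2 - 1) * (4 * (x + 1) ^ 2 - 1) * (x - m) * (x - m + 1) *
        ((x + 2) ^ 2 * (x ^ 2 + 1)) := by ring

/-- Let `m₀ ≤ 0` be an integer, `ℓ₀ = 2 - m₀`, and let `(u_ℓ)_{ℓ ≥ ℓ₀ - 1}` be strictly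
positive reals with
`u (ℓ+1) = u (ℓ-1) · [(ℓ²-1)(4(ℓ+1)²-1)(ℓ-m₀)(ℓ-m₀+1)] / [(4ℓ²-1)((ℓ+1)²-1)(ℓ+m₀+1)(ℓ+m₀)]`
for all `ℓ ≥ ℓ₀`.  Then `∑_{ℓ ≥ ℓ₀ - 1} u ℓ` diverges: `ρ₁₀` restricted to `so(2,1)` has
no highest-weight vector with `H₃`-eigenvalue `m₀ ≤ 0`. -/
theorem no_highest_weight_vector_for_nonpositive_weight (m0 : ℤ) (hm0 : m0 ≤ 0)
    (u : ℤ → ℝ) (hpos : ∀ ℓ : ℤ, 2 - m0 - 1 ≤ ℓ → 0 < u ℓ)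
    (hrec : ∀ ℓ : ℤ, 2 - m0 ≤ ℓ →
      u (ℓ + 1) = u (ℓ - 1) *
        ((((ℓ : ℝ) ^ 2 - 1) * (4 * ((ℓ : ℝ) + 1) ^ 2 - 1) *
            ((ℓ : ℝ) - (m0 : ℝ)) * ((ℓ : ℝ) - (m0 : ℝ) + 1)) /
          ((4 * (ℓ : ℝ) ^ 2 - 1) * (((ℓ : ℝ) + 1) ^ 2 - 1) *
            ((ℓ : ℝ) + (m0 : ℝ) + 1) * ((ℓ : ℝ) + (m0 : ℝ))))) :
    ¬ Summable (fun n : ℕ => u (2 - m0 - 1 + n)) := by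
  set H : ℤ → ℝ := fun ℓ => ((ℓ : ℝ) ^ 2 + 1) / (ℓ : ℝ) ^ 2 with hH
  have hm0R : ((m0 : ℝ)) ≤ 0 := by exact_mod_cast hm0
  have hHpos : ∀ ℓ : ℤ, 2 ≤ ℓ → 0 < H ℓ := by
    intro ℓ hℓ
    have : (2:ℝ) ≤ (ℓ:ℝ) := by exact_mod_cast hℓ
    have h0 : (0:ℝ) < (ℓ:ℝ) := by linarith
    simp only [hH]; positivity
  have hHge1 : ∀ ℓ : ℤ, 2 ≤ ℓ → 1 ≤ H ℓ := by
    intro ℓ hℓ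
    have : (2:ℝ) ≤ (ℓ:ℝ) := by exact_mod_cast hℓ
    have h0 : (0:ℝ) < (ℓ:ℝ)^2 := by positivity
    rw [hH, le_div_iff₀ h0]; nlinarith
  set c : ℝ := u (2 - m0 - 1) / H (2 - m0) with hc
  have hl0 : (2:ℤ) ≤ 2 - m0 := by omega
  have hcpos : 0 < c := div_pos (hpos _ le_rfl) (hHpos _ hl0)
  -- main induction: u (2 - m0 - 1 + 2k) ≥ c * H (2 - m0 + 2k)
  have main : ∀ k : ℕ, c * H (2 - m0 + 2 * k) ≤ u (2 - m0 - 1 + 2 * k) := by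
    intro k
    induction k with
    | zero =>
      simp only [Nat.cast_zero, mul_zero, add_zero, hc]
      rw [div_mul_cancel₀]
      exact ne_of_gt (hHpos _ hl0)
    | succ k ih =>
      set ℓ : ℤ := 2 - m0 + 2 * k with hℓ
      have hℓge : 2 - m0 ≤ ℓ := by omega
      have hℓ2 : (2:ℤ) ≤ ℓ := by omega
      have hxR : (2:ℝ) ≤ (ℓ:ℝ) := by exact_mod_cast hℓ2
      have hxmZ : (2:ℤ) ≤ ℓ + m0 := by omega
      have hxmR : (2:ℝ) ≤ (ℓ:ℝ) + (m0:ℝ) := by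
        have : ((2:ℤ):ℝ) ≤ ((ℓ + m0 : ℤ) : ℝ) := by exact_mod_cast hxmZ
        push_cast at this; linarith
      have hrat := ratio_ge (ℓ:ℝ) (m0:ℝ) hxR hm0R hxmR
      have hu := hrec ℓ hℓge
      have huprev : 0 < u (ℓ - 1) := hpos _ (by omega)
      have hHfrac : H (ℓ + 2) / H ℓ
          = ((((ℓ:ℝ) + 2) ^ 2 + 1) / ((ℓ:ℝ) + 2) ^ 2) / (((ℓ:ℝ) ^ 2 + 1) / (ℓ:ℝ) ^ 2) := by
        simp only [hH]; push_cast; ring_nf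
      have step : u (ℓ - 1) * (H (ℓ + 2) / H ℓ) ≤ u (ℓ + 1) := by
        rw [hu, hHfrac]
        exact mul_le_mul_of_nonneg_left hrat (le_of_lt huprev)
      have hHl2 : 0 < H (ℓ + 2) := hHpos _ (by omega)
      have hHl : 0 < H ℓ := hHpos _ hℓ2
      have ih' : c * H ℓ ≤ u (ℓ - 1) := by
        have : (2 - m0 - 1 + 2 * (k:ℤ)) = ℓ - 1 := by omega
        rw [← this]; exact ih
      have key : c * H (ℓ + 2) ≤ u (ℓ + 1) := by
        calc c * H (ℓ + 2) = (c * H ℓ) * (H (ℓ + 2) / H ℓ) := by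
              field_simp
          _ ≤ u (ℓ - 1) * (H (ℓ + 2) / H ℓ) := by
              apply mul_le_mul_of_nonneg_right ih' (le_of_lt (div_pos hHl2 hHl))
          _ ≤ u (ℓ + 1) := step
      have he1 : (2 - m0 - 1 + 2 * ((k+1 : ℕ) : ℤ)) = ℓ + 1 := by push_cast; omega
      have he2 : (2 - m0 + 2 * ((k+1 : ℕ) : ℤ)) = ℓ + 2 := by push_cast; omega
      rw [he1, he2]
      exact key
  -- conclude: the even subsequence is bounded below by c > 0
  intro hs
  have htend := hs.tendsto_atTop_zero
  have hg : Filter.Tendsto (fun k : ℕ => 2 * k) Filter.atTop Filter.atTop :=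
    Filter.tendsto_atTop_mono (fun k => by simp only [id_eq]; omega) Filter.tendsto_id
  have h2 : Filter.Tendsto (fun k : ℕ => u (2 - m0 - 1 + ((2 * k : ℕ) : ℤ)))
      Filter.atTop (nhds 0) := htend.comp hg
  have hev := h2.eventually (gt_mem_nhds hcpos)
  obtain ⟨k, hk⟩ := hev.exists
  have hbound : c ≤ u (2 - m0 - 1 + ((2 * k : ℕ) : ℤ)) := by
    have h1 : c * 1 ≤ c * H (2 - m0 + 2 * (k:ℤ)) :=
      mul_le_mul_of_nonneg_left (hHge1 (2 - m0 + 2 * (k:ℤ)) (by omega)) (le_of_lt hcpos)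
    have h2' := main k
    have hcast : ((2 * k : ℕ) : ℤ) = 2 * (k : ℤ) := by push_cast; ring
    rw [hcast]; linarith
  linarith
end

section
/- Let μ and c be real numbers with 0 ≤ μ < 1 and c < μ(μ−1), and let D⁰ be the complex vector space of finitely supported functions ℤ → ℂ with basis (f_n)_{n∈ℤ}. Define operators π(H₃)f_n = (n−μ)·f_n, π(F₊)f_n = √(n² + (1−2μ)n + μ(μ−1) − c)·f_{n+1}, π(F₋)f_n = √((n−1)² + (1−2μ)(n−1) + μ(μ−1) − c)·f_{n−1}. Then for every n ∈ ℤ the radicand n² + (1−2μ)n + μ(μ−1) − c is strictly positive; as operator identities on D⁰: [π(F₊),π(F₋)] = −2π(H₃), [π(H₃),π(F₊)] = π(F₊), [π(H₃),π(F₋)] = −π(F₋); and the Casimir operator π(H₃)² − (1/2)(π(F₊)π(F₋) + π(F₋)π(F₊)) equals c times the identity. -/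
noncomputable section

/-- The representation space `D⁰` of the principal/complementary series, with basis
`(f_n)_{n ∈ ℤ}`. -/
abbrev VZ := ℤ →₀ ℂ

/-- The basis vector `f_n`. -/
def fn (n : ℤ) : VZ := Finsupp.single n 1

/-- Build a linear operator on `VZ` from its values on the basis vectors `f_n`. -/
def mkOpZ (f : ℤ → VZ) : VZ →ₗ[ℂ] VZ :=
  Finsupp.lsum ℂ fun n => LinearMap.toSpanSingleton ℂ VZ (f n)

/-- The radicand `n² + (1-2μ)n + μ(μ-1) - c`. -/
def rad (μ c : ℝ) (n : ℤ) : ℝ := (n : ℝ) ^ 2 + (1 - 2 * μ) * (n : ℝ) + μ * (μ - 1) - c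

/-- `π_{c,μ}(H₃) f_n = (n-μ) f_n`. -/
def qH3 (μ c : ℝ) : VZ →ₗ[ℂ] VZ := mkOpZ fun n => (((n : ℝ) - μ : ℝ) : ℂ) • fn n

/-- `π_{c,μ}(F₊) f_n = √(n² + (1-2μ)n + μ(μ-1) - c) f_{n+1}`. -/
def qFp (μ c : ℝ) : VZ →ₗ[ℂ] VZ :=
  mkOpZ fun n => ((Real.sqrt (rad μ c n) : ℝ) : ℂ) • fn (n + 1)

/-- `π_{c,μ}(F₋) f_n = √((n-1)² + (1-2μ)(n-1) + μ(μ-1) - c) f_{n-1}`. -/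
def qFm (μ c : ℝ) : VZ →ₗ[ℂ] VZ :=
  mkOpZ fun n => ((Real.sqrt (rad μ c (n - 1)) : ℝ) : ℂ) • fn (n - 1)

lemma mkOpZ_fn (f : ℤ → VZ) (n : ℤ) : mkOpZ f (fn n) = f n := by
  rw [mkOpZ, fn, Finsupp.lsum_single, LinearMap.toSpanSingleton_apply_one]

lemma op_ext {X Y : VZ →ₗ[ℂ] VZ} (h : ∀ n, X (fn n) = Y (fn n)) : X = Y :=
  Finsupp.lhom_ext fun n b => by
    have hb : (Finsupp.single n b : VZ) = b • fn n := by
      rw [fn, Finsupp.smul_single, smul_eq_mul, mul_one]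
    rw [hb, map_smul, map_smul, h]

lemma rad_pos' (μ c : ℝ) (hμ0 : 0 ≤ μ) (hμ1 : μ < 1)
    (hc : c < μ * (μ - 1)) (n : ℤ) : 0 < rad μ c n := by
  have h : (0:ℝ) ≤ (n:ℝ) * ((n:ℝ) + 1 - 2*μ) := by
    rcases lt_trichotomy n 0 with h1 | h1 | h1
    · have h2 : (n:ℝ) ≤ -1 := by exact_mod_cast (by omega : n ≤ -1)
      nlinarith
    · simp [h1]
    · have h2 : (1:ℝ) ≤ (n:ℝ) := by exact_mod_cast h1
      nlinarith
  unfold rad; nlinarith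

lemma sqrt_mul_self' (μ c : ℝ) (hμ0 : 0 ≤ μ) (hμ1 : μ < 1) (hc : c < μ * (μ - 1)) (n : ℤ) :
    ((Real.sqrt (rad μ c n) : ℝ) : ℂ) * ((Real.sqrt (rad μ c n) : ℝ) : ℂ)
      = ((rad μ c n : ℝ) : ℂ) := by
  rw [← Complex.ofReal_mul, Real.mul_self_sqrt (rad_pos' μ c hμ0 hμ1 hc n).le]

/-- For `0 ≤ μ < 1` and `c < μ(μ-1)`, all radicands `n² + (1-2μ)n + μ(μ-1) - c` are
strictly positive, the operators of `π_{c,μ}` satisfy the `so(2,1)` relations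
`[π(F₊),π(F₋)] = -2π(H₃)`, `[π(H₃),π(F₊)] = π(F₊)`, `[π(H₃),π(F₋)] = -π(F₋)`, and the
Casimir operator `π(H₃)² - ½(π(F₊)π(F₋) + π(F₋)π(F₊))` equals `c` times the identity. -/
theorem principal_series_relations (μ c : ℝ) (hμ0 : 0 ≤ μ) (hμ1 : μ < 1)
    (hc : c < μ * (μ - 1)) :
    (∀ n : ℤ, 0 < rad μ c n) ∧
    qFp μ c ∘ₗ qFm μ c - qFm μ c ∘ₗ qFp μ c = (-2 : ℂ) • qH3 μ c ∧
    qH3 μ c ∘ₗ qFp μ c - qFp μ c ∘ₗ qH3 μ c = qFp μ c ∧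
    qH3 μ c ∘ₗ qFm μ c - qFm μ c ∘ₗ qH3 μ c = -qFm μ c ∧
    qH3 μ c ∘ₗ qH3 μ c - (2 : ℂ)⁻¹ • (qFp μ c ∘ₗ qFm μ c + qFm μ c ∘ₗ qFp μ c)
      = ((c : ℝ) : ℂ) • LinearMap.id := by
  have hH : ∀ n : ℤ, qH3 μ c (fn n) = (((n : ℝ) - μ : ℝ) : ℂ) • fn n := fun n => mkOpZ_fn _ n
  have hP : ∀ n : ℤ, qFp μ c (fn n) = ((Real.sqrt (rad μ c n) : ℝ) : ℂ) • fn (n + 1) :=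
    fun n => mkOpZ_fn _ n
  have hM : ∀ n : ℤ, qFm μ c (fn n) = ((Real.sqrt (rad μ c (n - 1)) : ℝ) : ℂ) • fn (n - 1) :=
    fun n => mkOpZ_fn _ n
  have hs := sqrt_mul_self' μ c hμ0 hμ1 hc
  refine ⟨rad_pos' μ c hμ0 hμ1 hc, ?_, ?_, ?_, ?_⟩ <;>
    refine op_ext fun n => ?_ <;>
    simp only [LinearMap.sub_apply, LinearMap.comp_apply, LinearMap.smul_apply,
      LinearMap.add_apply, LinearMap.neg_apply, LinearMap.id_apply, hH, hP, hM, map_smul,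
      smul_smul, sub_add_cancel, add_sub_cancel_right, hs, ← sub_smul, ← add_smul, ← neg_smul]
  · congr 1; unfold rad; push_cast; ring
  · congr 1; push_cast; ring
  · congr 1; push_cast; ring
  · congr 1; unfold rad; push_cast; ring

end
end
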